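/- arXiv:math/0509253 — 2 statements merged into one kernel-verified Lean document; each statement's English description precedes it below -/
import Mathlib

section
/- Let G be an (n, d, c√d) algebraic expander with c ≥ 1, let p satisfy pd ≥ 5c√d, and let H be an induced subgraph of G with minimum degree at least 3pd/5 (in H). Then every vertex subset S of H with |S| ≤ cn/√d satisfies |∂_E S| ≥ (pd/5)|S|, where ∂_E S is the set of edges of H with exactly one endpoint in S. -/
open Finset

/-- Spectral bound: the second largest eigenvalue of `G` in absolute value is at most `lam`. -/
def specBound {V : Type} [Fintype V] (G : SimpleGraph V) [DecidableRel G.Adj] (lam : ℝ) : Prop :=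
  ∀ x : V → ℝ, (∑ v, x v) = 0 →
    |∑ u, ∑ v, (if G.Adj u v then x u * x v else 0)| ≤ lam * ∑ v, (x v) ^ 2

/-- Let `G` be an `(n, d, c√d)` algebraic expander with `c ≥ 1`, `pd ≥ 5c√d`, and let
`H` be the subgraph of `G` induced on a vertex set `W` with minimum degree (in `H`)
at least `3pd/5`. Then every `S ⊆ W` with `|S| ≤ cn/√d` has edge boundary in `H` of
size at least `(pd/5)|S|`. -/
theorem stmt_7 {V : Type} [Fintype V] [DecidableEq V] (G : SimpleGraph V)
    [DecidableRel G.Adj] (n d : ℕ) (c p : ℝ) (hn : Fintype.card V = n)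
    (hreg : G.IsRegularOfDegree d) (hspec : specBound G (c * Real.sqrt d))
    (hc : 1 ≤ c) (hp : 5 * c * Real.sqrt d ≤ p * d)
    (W : Finset V)
    (hmin : ∀ v ∈ W, 3 * p * d / 5 ≤ ((W.filter (fun u => G.Adj v u)).card : ℝ))
    (S : Finset V) (hSW : S ⊆ W) (hS : (S.card : ℝ) ≤ c * n / Real.sqrt d) :
    p * d / 5 * S.card
      ≤ ∑ u ∈ S, ∑ v ∈ W \ S, if G.Adj u v then (1 : ℝ) else 0 := by
  classical
  rcases S.eq_empty_or_nonempty with hSe | hSne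
  · simp [hSe]
  have hnpos : 0 < n := by
    rcases hSne with ⟨v, _⟩
    have : 0 < Fintype.card V := Fintype.card_pos_iff.mpr ⟨v⟩
    omega
  have hspos : 0 < (S.card : ℝ) := by exact_mod_cast hSne.card_pos
  have hdpos : 0 < d := by
    by_contra h
    have hd0 : d = 0 := by omega
    rw [hd0] at hS
    simp at hS
    exact absurd hS hSne.ne_empty
  have hdr : (0:ℝ) < d := by exact_mod_cast hdpos
  have hsqd : 0 < Real.sqrt d := Real.sqrt_pos.mpr hdr
  have hsq : Real.sqrt d * Real.sqrt d = d := Real.mul_self_sqrt hdr.le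
  set s : ℝ := (S.card : ℝ) with hsdef
  set nn : ℝ := (n : ℝ) with hnndef
  have hnn : 0 < nn := by rw [hnndef]; exact_mod_cast hnpos
  set χ : V → ℝ := fun v => if v ∈ S then 1 else 0 with hχ
  set x : V → ℝ := fun v => χ v - s / nn with hx
  have hcardV : (Finset.univ : Finset V).card = n := by
    rw [Finset.card_univ, hn]
  have hχsum : ∑ v, χ v = s := by
    simp [hχ, hsdef]
  have hrestr : ∀ f : V → ℝ, (∑ u, χ u * f u) = ∑ u ∈ S, f u := by
    intro f
    simp [hχ, ite_mul, Finset.sum_ite_mem]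
  have hsum0 : (∑ v, x v) = 0 := by
    simp only [hx, Finset.sum_sub_distrib, hχsum, Finset.sum_const, hcardV, nsmul_eq_mul]
    field_simp
    rw [hnndef]; ring
  -- degree sums
  have hdeg : ∀ u : V, (∑ v, (if G.Adj u v then (1:ℝ) else 0)) = d := by
    intro u
    rw [Finset.sum_boole]
    have h1 := hreg u
    rw [← h1, SimpleGraph.degree]
    norm_num
    congr 1
    ext v
    simp [SimpleGraph.mem_neighborFinset]
  have hdeg' : ∀ v : V, (∑ u, (if G.Adj u v then (1:ℝ) else 0)) = d := by
    intro v
    have : ∀ u : V, (if G.Adj u v then (1:ℝ) else 0) = (if G.Adj v u then (1:ℝ) else 0) := by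
      intro u; simp [G.adj_comm]
    simp_rw [this]
    exact hdeg v
  set e2 : ℝ := ∑ u ∈ S, ∑ v ∈ S, (if G.Adj u v then (1:ℝ) else 0) with he2
  -- four double sums
  have T4 : (∑ u, ∑ v, (if G.Adj u v then (1:ℝ) else 0)) = nn * d := by
    simp [hdeg, hcardV, hnndef]
  have T2 : (∑ u, ∑ v, (if G.Adj u v then χ u else 0)) = s * d := by
    have : ∀ u : V, (∑ v, (if G.Adj u v then χ u else 0)) = χ u * d := by
      intro u
      have h : ∀ v : V, (if G.Adj u v then χ u else 0) = χ u * (if G.Adj u v then (1:ℝ) else 0) := by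
        intro v; split <;> ring
      simp_rw [h, ← Finset.mul_sum, hdeg]
    simp_rw [this, ← Finset.sum_mul, hχsum]
  have T3 : (∑ u, ∑ v, (if G.Adj u v then χ v else 0)) = s * d := by
    rw [Finset.sum_comm]
    have : ∀ v : V, (∑ u, (if G.Adj u v then χ v else 0)) = χ v * d := by
      intro v
      have h : ∀ u : V, (if G.Adj u v then χ v else 0) = χ v * (if G.Adj u v then (1:ℝ) else 0) := by
        intro u; split <;> ring
      simp_rw [h, ← Finset.mul_sum, hdeg']
    simp_rw [this, ← Finset.sum_mul, hχsum]
  have T1 : (∑ u, ∑ v, (if G.Adj u v then χ u * χ v else 0)) = e2 := by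
    have h1 : ∀ u : V, (∑ v, (if G.Adj u v then χ u * χ v else 0))
        = χ u * (∑ v, χ v * (if G.Adj u v then (1:ℝ) else 0)) := by
      intro u
      rw [Finset.mul_sum]
      apply Finset.sum_congr rfl
      intro v _
      split <;> ring
    simp_rw [h1]
    rw [he2]
    have h2 : ∀ u : V, (∑ v, χ v * (if G.Adj u v then (1:ℝ) else 0))
        = ∑ v ∈ S, (if G.Adj u v then (1:ℝ) else 0) := fun u => hrestr _
    simp_rw [h2]
    exact hrestr _
  have hD : (∑ u, ∑ v, (if G.Adj u v then x u * x v else 0)) = e2 - s^2 * d / nn := by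
    have key : ∀ u v : V, (if G.Adj u v then x u * x v else 0) =
        (if G.Adj u v then χ u * χ v else 0)
        - s/nn * (if G.Adj u v then χ u else 0)
        - s/nn * (if G.Adj u v then χ v else 0)
        + (s/nn)^2 * (if G.Adj u v then (1:ℝ) else 0) := by
      intro u v
      by_cases h : G.Adj u v <;> simp [h, hx] <;> ring
    simp_rw [key]
    rw [show (∑ u, ∑ v, ((if G.Adj u v then χ u * χ v else 0)
        - s/nn * (if G.Adj u v then χ u else 0)
        - s/nn * (if G.Adj u v then χ v else 0)
        + (s/nn)^2 * (if G.Adj u v then (1:ℝ) else 0)))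
      = (∑ u, ∑ v, (if G.Adj u v then χ u * χ v else 0))
        - s/nn * (∑ u, ∑ v, (if G.Adj u v then χ u else 0))
        - s/nn * (∑ u, ∑ v, (if G.Adj u v then χ v else 0))
        + (s/nn)^2 * (∑ u, ∑ v, (if G.Adj u v then (1:ℝ) else 0)) by
        simp only [Finset.mul_sum, Finset.sum_sub_distrib, Finset.sum_add_distrib]]
    rw [T1, T2, T3, T4]
    field_simp
    ring
  have hx2 : (∑ v, x v ^ 2) = s - s^2 / nn := by
    have key : ∀ v : V, x v ^ 2 = χ v - 2 * (s/nn) * χ v + (s/nn)^2 := by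
      intro v
      by_cases h : v ∈ S <;> simp [hx, hχ, h] <;> ring
    simp_rw [key]
    rw [Finset.sum_add_distrib, Finset.sum_sub_distrib]
    rw [hχsum, ← Finset.mul_sum, hχsum, Finset.sum_const, hcardV, nsmul_eq_mul]
    field_simp
    ring
  have hmix := hspec x hsum0
  rw [hD, hx2] at hmix
  have hcd : 0 ≤ c * Real.sqrt d := by positivity
  have habs : e2 - s^2 * d / nn ≤ c * Real.sqrt d * (s - s^2/nn) := le_trans (le_abs_self _) hmix
  have hs2 : 0 ≤ s^2 / nn := by positivity
  have hsdn : s * d / nn ≤ c * Real.sqrt d := by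
    rw [div_le_iff₀ hnn]
    have h1 : s * Real.sqrt d ≤ c * nn := by
      rw [le_div_iff₀ hsqd] at hS
      exact hS
    nlinarith [mul_le_mul_of_nonneg_right h1 hsqd.le, hsq, hsqd.le]
  have he2bound : e2 ≤ 2 * (c * Real.sqrt d) * s := by
    have h1 : s^2 * d / nn = s * (s * d / nn) := by ring
    have h2 : s^2 * d / nn ≤ s * (c * Real.sqrt d) := by
      rw [h1]; exact mul_le_mul_of_nonneg_left hsdn hspos.le
    have h3 : 0 ≤ c * Real.sqrt d * (s^2/nn) := by positivity
    have heq : c * Real.sqrt d * (s - s^2/nn)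
        = c * Real.sqrt d * s - c * Real.sqrt d * (s^2/nn) := by ring
    linarith
  have hcsd : c * Real.sqrt d ≤ p * d / 5 := by linarith
  have he2p : e2 ≤ 2 * (p * d / 5) * s := by
    have := mul_le_mul_of_nonneg_right hcsd hspos.le
    linarith
  -- boundary identity
  have hbnd : (∑ u ∈ S, ∑ v ∈ W \ S, (if G.Adj u v then (1:ℝ) else 0))
      = (∑ u ∈ S, ∑ v ∈ W, (if G.Adj u v then (1:ℝ) else 0)) - e2 := by
    rw [he2, ← Finset.sum_sub_distrib]
    apply Finset.sum_congr rfl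
    intro u _
    rw [eq_sub_iff_add_eq, Finset.sum_sdiff hSW]
  have hdegW : ∀ u ∈ S, 3 * p * d / 5 ≤ ∑ v ∈ W, (if G.Adj u v then (1:ℝ) else 0) := by
    intro u hu
    rw [Finset.sum_boole]
    exact hmin u (hSW hu)
  have hsum3 : 3 * p * d / 5 * s ≤ ∑ u ∈ S, ∑ v ∈ W, (if G.Adj u v then (1:ℝ) else 0) := by
    calc 3 * p * d / 5 * s = ∑ _u ∈ S, 3 * p * d / 5 := by
          rw [Finset.sum_const, nsmul_eq_mul, hsdef]; ring
    _ ≤ _ := Finset.sum_le_sum hdegW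
  rw [hbnd]
  linarith
end

section
/- Let G be an (n, d, c√d) algebraic expander with c ≥ 1 and d sufficiently large, and suppose pd ≥ 5c√d. Consider the deletion process: remove S₀ (vertices of G_p-degree outside [4pd/5, 6pd/5]), then iteratively remove any vertex of current degree < 3pd/5. If |S₀| ≤ e^{−c√d/12}·n, then the total number of vertices removed in the iterative phase is at most 2|S₀|; hence |OUT| ≤ 3e^{−c√d/12}·n. -/
open Finset
open scoped Classical

/-- One step of the deletion process: keep only the vertices of `A` having at least `θ`
neighbors (in `Gp`) inside `A`. -/
noncomputable def peel {V : Type} [Fintype V] (Gp : SimpleGraph V) [DecidableRel Gp.Adj]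
    (θ : ℝ) (A : Finset V) : Finset V :=
  A.filter fun v => θ ≤ ((A.filter fun u => Gp.Adj v u).card : ℝ)

section Aux
set_option linter.unusedSectionVars false
variable {V : Type} [Fintype V]

lemma peel_iterate_subset (Gp : SimpleGraph V) [DecidableRel Gp.Adj] (θ : ℝ) (X : Finset V) :
    ∀ k, (peel Gp θ)^[k] X ⊆ X
  | 0 => subset_rfl
  | (k+1) => by
      rw [Function.iterate_succ_apply']
      exact (Finset.filter_subset _ _).trans (peel_iterate_subset Gp θ X k)

/-- Number of ordered adjacent pairs inside `W`. -/
noncomputable def Ecount (Gp : SimpleGraph V) [DecidableRel Gp.Adj] (W : Finset V) : ℕ :=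
  ∑ v ∈ W, (W.filter fun u => Gp.Adj v u).card

lemma Ecount_mono (Gp G : SimpleGraph V) [DecidableRel Gp.Adj] [DecidableRel G.Adj]
    (h : Gp ≤ G) (W : Finset V) : Ecount Gp W ≤ Ecount G W := by
  refine Finset.sum_le_sum fun v _ => Finset.card_le_card ?_
  intro u hu; simp only [Finset.mem_filter] at hu ⊢; exact ⟨hu.1, h hu.2⟩

lemma Ecount_step [DecidableEq V] (Gp : SimpleGraph V) [DecidableRel Gp.Adj]
    (C T : Finset V) (hdisj : Disjoint C T) (m : ℝ)
    (ht : ∀ t ∈ T, m ≤ ((C.filter fun u => Gp.Adj t u).card : ℝ)) :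
    (Ecount Gp C : ℝ) + 2 * m * T.card ≤ (Ecount Gp (C ∪ T) : ℝ) := by
  have swap : ∑ v ∈ C, (T.filter fun u => Gp.Adj v u).card
      = ∑ t ∈ T, (C.filter fun u => Gp.Adj t u).card := by
    calc ∑ v ∈ C, (T.filter fun u => Gp.Adj v u).card
        = ∑ v ∈ C, ∑ u ∈ T, (if Gp.Adj v u then 1 else 0) := by
          simp only [Finset.card_filter]
      _ = ∑ u ∈ T, ∑ v ∈ C, (if Gp.Adj v u then 1 else 0) := Finset.sum_comm
      _ = ∑ t ∈ T, ∑ u ∈ C, (if Gp.Adj t u then 1 else 0) := by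
          refine Finset.sum_congr rfl fun u _ => Finset.sum_congr rfl fun v _ => ?_
          by_cases h : Gp.Adj v u
          · rw [if_pos h, if_pos h.symm]
          · rw [if_neg h, if_neg fun h' => h h'.symm]
      _ = ∑ t ∈ T, (C.filter fun u => Gp.Adj t u).card := by
          simp only [Finset.card_filter]
  have hkey : Ecount Gp C + 2 * ∑ t ∈ T, (C.filter fun u => Gp.Adj t u).card
      ≤ Ecount Gp (C ∪ T) := by
    have h1 : Ecount Gp (C ∪ T) = (∑ v ∈ C, ((C ∪ T).filter fun u => Gp.Adj v u).card)
        + ∑ v ∈ T, ((C ∪ T).filter fun u => Gp.Adj v u).card := by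
      rw [Ecount, Finset.sum_union hdisj]
    have h2 : ∀ v, ((C ∪ T).filter fun u => Gp.Adj v u).card
        = (C.filter fun u => Gp.Adj v u).card + (T.filter fun u => Gp.Adj v u).card := by
      intro v
      rw [Finset.filter_union, Finset.card_union_of_disjoint
        (Finset.disjoint_filter_filter hdisj)]
    have h3 : ∀ v ∈ T, (C.filter fun u => Gp.Adj v u).card
        ≤ ((C ∪ T).filter fun u => Gp.Adj v u).card := by
      intro v _
      exact Finset.card_le_card (Finset.filter_subset_filter _ Finset.subset_union_left)
    calc Ecount Gp C + 2 * ∑ t ∈ T, (C.filter fun u => Gp.Adj t u).card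
        = (∑ v ∈ C, ((C.filter fun u => Gp.Adj v u).card
            + (T.filter fun u => Gp.Adj v u).card))
          + ∑ t ∈ T, (C.filter fun u => Gp.Adj t u).card := by
          rw [Finset.sum_add_distrib, swap, Ecount]; ring
      _ ≤ (∑ v ∈ C, ((C ∪ T).filter fun u => Gp.Adj v u).card)
          + ∑ v ∈ T, ((C ∪ T).filter fun u => Gp.Adj v u).card := by
          refine Nat.add_le_add ?_ (Finset.sum_le_sum h3)
          exact le_of_eq (Finset.sum_congr rfl fun v _ => (h2 v).symm)
      _ = Ecount Gp (C ∪ T) := h1.symm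
  have hms : m * T.card ≤ ((∑ t ∈ T, (C.filter fun u => Gp.Adj t u).card : ℕ) : ℝ) := by
    push_cast
    calc m * T.card = ∑ _t ∈ T, m := by rw [Finset.sum_const, nsmul_eq_mul]; ring
      _ ≤ ∑ t ∈ T, ((C.filter fun u => Gp.Adj t u).card : ℝ) := Finset.sum_le_sum ht
  have hcast : (Ecount Gp C : ℝ) + 2 * ((∑ t ∈ T, (C.filter fun u => Gp.Adj t u).card : ℕ) : ℝ)
      ≤ (Ecount Gp (C ∪ T) : ℝ) := by exact_mod_cast hkey
  nlinarith [hms, hcast]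

lemma mixing (G : SimpleGraph V) [DecidableRel G.Adj] (d : ℕ) (lam : ℝ)
    (hlam : 0 ≤ lam) (hreg : G.IsRegularOfDegree d) (hspec : specBound G lam) (W : Finset V) :
    (Ecount G W : ℝ) ≤ d * W.card ^ 2 / (Fintype.card V) + lam * W.card := by
  classical
  rcases Nat.eq_zero_or_pos (Fintype.card V) with h0 | hpos
  · have hW : W = ∅ := by
      have : IsEmpty V := Fintype.card_eq_zero_iff.mp h0
      exact Finset.eq_empty_of_isEmpty W
    subst hW; simp [Ecount]
  set nn : ℝ := (Fintype.card V : ℝ) with hnn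
  have hn0 : (0:ℝ) < nn := by rw [hnn]; exact_mod_cast hpos
  set w : ℝ := (W.card : ℝ) with hw
  set f : V → ℝ := fun v => if v ∈ W then (1:ℝ) else 0 with hf
  set x : V → ℝ := fun v => f v - w / nn with hx
  have hfsum : ∑ v, f v = w := by
    rw [hf, hw, Finset.sum_ite_mem, Finset.univ_inter, Finset.sum_const, nsmul_eq_mul, mul_one]
  have hsum : ∑ v, x v = 0 := by
    simp only [hx, Finset.sum_sub_distrib, hfsum, Finset.sum_const, Finset.card_univ,
      nsmul_eq_mul]
    rw [← hnn]; field_simp; ring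
  have ind_sum : ∀ h : V → ℝ, (∑ u, f u * h u) = ∑ u ∈ W, h u := by
    intro h
    have h1 : ∀ u, f u * h u = if u ∈ W then h u else 0 := by
      intro u; by_cases hu : u ∈ W <;> simp [hf, hu]
    simp only [h1]
    rw [Finset.sum_ite_mem, Finset.univ_inter]
  set g : V → V → ℝ := fun u v => if G.Adj u v then (1:ℝ) else 0 with hg
  have hdeg : ∀ u, ∑ v, g u v = (d : ℝ) := by
    intro u
    rw [hg]
    simp only []
    rw [Finset.sum_boole]
    have : Finset.univ.filter (fun v => G.Adj u v) = G.neighborFinset u := by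
      ext v; simp
    rw [this]
    exact_mod_cast congrArg Nat.cast (hreg u)
  have hdeg2 : ∀ v, ∑ u, g u v = (d : ℝ) := by
    intro v
    have : ∀ u, g u v = g v u := by
      intro u; simp only [hg]; by_cases h : G.Adj u v
      · rw [if_pos h, if_pos h.symm]
      · rw [if_neg h, if_neg fun h' => h h'.symm]
    simp only [this]; exact hdeg v
  set Bq : V → ℝ := fun u => ∑ v ∈ W, g u v with hBq
  have hinner : ∀ u, (∑ v, if G.Adj u v then x u * x v else 0) = x u * (Bq u - d * w / nn) := by
    intro u
    have h1 : ∀ v, (if G.Adj u v then x u * x v else 0) = x u * (g u v * x v) := by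
      intro v; simp only [hg]; by_cases h : G.Adj u v <;> simp [h]
    simp only [h1, ← Finset.mul_sum]
    congr 1
    have h2 : ∀ v, g u v * x v = g u v * f v - g u v * (w / nn) := by
      intro v; rw [hx]; ring
    simp only [h2, Finset.sum_sub_distrib, ← Finset.sum_mul, hdeg]
    have h3 : ∑ v, g u v * f v = Bq u := by
      have : ∀ v, g u v * f v = f v * g u v := fun v => mul_comm _ _
      simp only [this]
      rw [ind_sum (g u), hBq]
    rw [h3]; ring
  have hBqsum : ∑ u, Bq u = d * w := by
    rw [hBq]
    rw [Finset.sum_comm]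
    have : ∀ v ∈ W, ∑ u, g u v = (d:ℝ) := fun v _ => hdeg2 v
    rw [Finset.sum_congr rfl this, Finset.sum_const, nsmul_eq_mul, hw]; ring
  have hBqW : ∑ u ∈ W, Bq u = (Ecount G W : ℝ) := by
    rw [Ecount]
    push_cast
    refine Finset.sum_congr rfl fun u _ => ?_
    rw [hBq]
    simp only [hg]
    rw [Finset.sum_boole]
  have hS : (∑ u, ∑ v, if G.Adj u v then x u * x v else 0)
      = (Ecount G W : ℝ) - d * w ^ 2 / nn := by
    simp only [hinner]
    have h4 : ∀ u, x u * (Bq u - d * w / nn) = f u * Bq u - (w/nn) * Bq u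
        - (d * w / nn) * x u := by
      intro u; rw [hx]; ring
    simp only [h4, Finset.sum_sub_distrib, ← Finset.mul_sum, hsum, ind_sum Bq, hBqW, hBqsum]
    ring
  have hX2 : ∑ v, (x v)^2 ≤ w := by
    have h5 : ∀ v, (x v)^2 = f v - 2 * (w/nn) * f v + (w/nn)^2 := by
      intro v
      rw [hx, hf]
      by_cases hv : v ∈ W <;> simp [hv] <;> ring
    simp only [h5]
    rw [Finset.sum_add_distrib, Finset.sum_sub_distrib, ← Finset.mul_sum, hfsum,
      Finset.sum_const, Finset.card_univ, nsmul_eq_mul, ← hnn]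
    have hwn : w ≤ nn := by
      rw [hw, hnn]
      exact_mod_cast Finset.card_le_univ W
    have hw0 : 0 ≤ w := by positivity
    have : nn * (w/nn)^2 = w * (w / nn) := by field_simp
    rw [this]
    nlinarith [div_nonneg hw0 hn0.le, mul_nonneg hw0 (div_nonneg hw0 hn0.le)]
  have hspec' := hspec x hsum
  rw [hS] at hspec'
  have habs : (Ecount G W : ℝ) - d * w ^ 2 / nn ≤ lam * ∑ v, (x v)^2 :=
    le_trans (le_abs_self _) hspec'
  have : lam * ∑ v, (x v)^2 ≤ lam * w :=
    mul_le_mul_of_nonneg_left hX2 hlam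
  linarith

end Aux

lemma numeric_bound (d : ℕ) (hd : 10^12 ≤ d) :
    9 * (d:ℝ) * Real.exp (-(Real.sqrt d)/12) + 4 ≤ Real.sqrt d := by
  set x := Real.sqrt d with hxdef
  have hd0 : (0:ℝ) ≤ d := by positivity
  have hx2 : x^2 = d := Real.sq_sqrt hd0
  have hx : (10:ℝ)^6 ≤ x := by
    rw [hxdef]
    rw [show ((10:ℝ)^6) = Real.sqrt (10^12) by
      rw [show ((10:ℝ)^12) = ((10:ℝ)^6)^2 by ring, Real.sqrt_sq (by positivity)]]
    exact Real.sqrt_le_sqrt (by exact_mod_cast hd)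
  have hx0 : (0:ℝ) < x := by linarith [pow_pos (show (0:ℝ) < 10 by norm_num) 6]
  have hexp3 : (x/36)^3 ≤ Real.exp (x/12) := by
    have h1 : Real.exp (x/12) = (Real.exp (x/36))^3 := by
      rw [show x/12 = (3:ℕ) * (x/36) by push_cast; ring, Real.exp_nat_mul]
    rw [h1]
    exact pow_le_pow_left₀ (by positivity) (by linarith [Real.add_one_le_exp (x/36)]) 3
  have hx3pos : (0:ℝ) < (x/36)^3 := by positivity
  have hinv : Real.exp (-x/12) ≤ 46656 / x^3 := by
    rw [show -x/12 = -(x/12) by ring, Real.exp_neg]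
    rw [show (46656:ℝ)/x^3 = ((x/36)^3)⁻¹ by field_simp; ring]
    exact inv_anti₀ hx3pos hexp3
  have hmain : 9 * (d:ℝ) * Real.exp (-x/12) ≤ 419904 / x := by
    calc 9 * (d:ℝ) * Real.exp (-x/12) ≤ 9 * (d:ℝ) * (46656 / x^3) := by
          have h9 : (0:ℝ) ≤ 9 * (d:ℝ) := by positivity
          exact mul_le_mul_of_nonneg_left hinv h9
      _ = 419904 / x := by
          rw [← hx2]; field_simp; ring
  have hfin : (419904:ℝ) / x ≤ 1 := by
    rw [div_le_one hx0]; linarith [hx]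
  linarith


lemma numeric_contra (d n : ℕ) (hd : 10^12 ≤ d) (lam s E m : ℝ)
    (hs0 : 0 ≤ s) (hnpos : (0:ℝ) < n) (hdn : (d:ℝ) < n)
    (hlamsq : Real.sqrt d ≤ lam)
    (hen : s ≤ Real.exp (-lam / 12) * n)
    (hm : lam ≤ m)
    (hlow : 2 * m * (2 * s + 1) ≤ E)
    (hup : E ≤ (d:ℝ) * (3 * s + 1) ^ 2 / n + lam * (3 * s + 1)) : False := by
  set e := Real.exp (-lam / 12) with he
  have he0 : (0:ℝ) ≤ e := (Real.exp_pos _).le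
  have hd0 : (0:ℝ) ≤ d := by positivity
  have hsqd0 : (0:ℝ) ≤ Real.sqrt d := Real.sqrt_nonneg _
  have hlam0 : (0:ℝ) ≤ lam := le_trans hsqd0 hlamsq
  have hA1 : lam * (s + 1) ≤ (d:ℝ) * (3 * s + 1) ^ 2 / n := by
    have hmm1 : 2 * lam * (2 * s + 1) ≤ 2 * m * (2 * s + 1) := by nlinarith [hm, hs0]
    linarith [hmm1, hlow, hup]
  have hA1' : lam * (s + 1) * n ≤ (d:ℝ) * (3 * s + 1) ^ 2 :=
    (le_div_iff₀ hnpos).mp hA1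
  have hsq : (3 * s + 1) ^ 2 ≤ (3 * (s + 1)) * (3 * (e * n) + 1) := by
    nlinarith [hen, hs0, mul_le_mul_of_nonneg_left hen (by positivity : (0:ℝ) ≤ 9 * s)]
  have hA2 : lam * (s + 1) * n ≤ 3 * (d:ℝ) * (s + 1) * (3 * (e * n) + 1) := by
    nlinarith [mul_le_mul_of_nonneg_left hsq hd0]
  have hsp : (0:ℝ) < s + 1 := by linarith
  have hA3 : lam * n ≤ 3 * (d:ℝ) * (3 * (e * n) + 1) := by
    by_contra hcon2
    push_neg at hcon2
    nlinarith [hA2, hsp, hcon2]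
  have hA4 : lam * n < 9 * (d:ℝ) * e * n + 3 * n := by nlinarith [hA3, hdn]
  have hA5 : lam < 9 * (d:ℝ) * e + 3 := by
    by_contra hcon3
    push_neg at hcon3
    nlinarith [hA4, hnpos, hcon3]
  have hecomp : e ≤ Real.exp (-(Real.sqrt d) / 12) := by
    rw [he]
    apply Real.exp_le_exp.mpr
    linarith [hlamsq]
  have hmono : 9 * (d:ℝ) * e ≤ 9 * (d:ℝ) * Real.exp (-(Real.sqrt d) / 12) :=
    mul_le_mul_of_nonneg_left hecomp (by positivity)
  have hnum := numeric_bound d hd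
  linarith [hA5, hmono, hnum, hlamsq]

set_option maxHeartbeats 1000000 in
/-- Deletion process: remove `S₀` (vertices of `G_p`-degree outside `[4pd/5, 6pd/5]`),
then iteratively remove vertices of current degree `< 3pd/5` (iterating `n` steps
reaches the stable graph `G_p^k`). If `|S₀| ≤ e^{−c√d/12}n`, then at most `2|S₀|`
vertices are removed in the iterative phase; hence `|OUT| ≤ 3e^{−c√d/12}n`
(for `c ≥ 1`, `pd ≥ 5c√d` and `d` sufficiently large). -/
theorem stmt_14 : ∃ d0 : ℕ, ∀ (V : Type) [Fintype V] [DecidableEq V]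
    (G Gp : SimpleGraph V) [DecidableRel G.Adj] [DecidableRel Gp.Adj]
    (n d : ℕ) (c p : ℝ),
    Fintype.card V = n → d0 ≤ d → 1 ≤ c → G.IsRegularOfDegree d →
    specBound G (c * Real.sqrt d) → Gp ≤ G → 5 * c * Real.sqrt d ≤ p * d →
    ∀ S0 A : Finset V,
    S0 = Finset.univ.filter (fun v =>
      ¬(4 * p * d / 5 ≤ (Gp.degree v : ℝ) ∧ (Gp.degree v : ℝ) ≤ 6 * p * d / 5)) →
    A = (peel Gp (3 * p * d / 5))^[n] (Finset.univ \ S0) →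
    (S0.card : ℝ) ≤ Real.exp (-(c * Real.sqrt d) / 12) * n →
    (Finset.univ \ S0).card - A.card ≤ 2 * S0.card ∧
      (((Finset.univ \ A).card : ℝ) ≤ 3 * Real.exp (-(c * Real.sqrt d) / 12) * n) := by
  refine ⟨10^12, ?_⟩
  intro V _ _ G Gp _ _ n d c p hcard hd hc hreg hspec hle hpd S0 A hS0 hA hS0card
  classical
  set θ : ℝ := 3 * p * d / 5 with hθ
  set lam : ℝ := c * Real.sqrt d with hlamdef
  have hsq0 : (0:ℝ) ≤ Real.sqrt d := Real.sqrt_nonneg _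
  have hc0 : (0:ℝ) < c := lt_of_lt_of_le one_pos hc
  have hlam0 : 0 ≤ lam := mul_nonneg hc0.le hsq0
  have hm0 : lam ≤ p * d / 5 := by rw [hlamdef]; linarith [hpd]
  have hm0' : (0:ℝ) ≤ p * d / 5 := le_trans hlam0 hm0
  set B : ℕ → Finset V := fun k => (peel Gp θ)^[k] (Finset.univ \ S0) with hBdef
  have hB0 : B 0 = Finset.univ \ S0 := by simp only [hBdef, Function.iterate_zero_apply]
  have hBsucc : ∀ k, B (k+1) = peel Gp θ (B k) := by
    intro k; simp only [hBdef]; exact Function.iterate_succ_apply' _ _ _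
  have hBsub : ∀ k, B k ⊆ Finset.univ \ S0 := by
    intro k; simp only [hBdef]; exact peel_iterate_subset _ _ _ k
  have hBmono : ∀ k, B (k+1) ⊆ B k := by
    intro k; rw [hBsucc]; exact Finset.filter_subset _ _
  have hdeg_lb : ∀ v, v ∉ S0 → 4 * p * d / 5 ≤ (Gp.degree v : ℝ) := by
    intro v hv
    rw [hS0] at hv
    simp only [Finset.mem_filter, Finset.mem_univ, true_and, not_not] at hv
    exact hv.1
  have hremoved : ∀ k t, t ∈ B k → t ∉ B (k+1) →
      p * d / 5 ≤ (((Finset.univ \ B k).filter fun u => Gp.Adj t u).card : ℝ) := by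
    intro k t htk htk1
    have ht0 : t ∉ S0 := fun h => (Finset.mem_sdiff.mp (hBsub k htk)).2 h
    have hdegt := hdeg_lb t ht0
    have hlt : (((B k).filter fun u => Gp.Adj t u).card : ℝ) < θ := by
      by_contra hge
      push_neg at hge
      exact htk1 (by rw [hBsucc]; exact Finset.mem_filter.mpr ⟨htk, hge⟩)
    have hsplit : Gp.degree t = ((B k).filter fun u => Gp.Adj t u).card
        + ((Finset.univ \ B k).filter fun u => Gp.Adj t u).card := by
      have h1 : Gp.degree t = (Finset.univ.filter fun u => Gp.Adj t u).card := by
        rw [show (Finset.univ.filter fun u => Gp.Adj t u) = Gp.neighborFinset t from by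
          ext u; simp]
        rfl
      have h2 : (Finset.univ : Finset V) = B k ∪ (Finset.univ \ B k) :=
        (Finset.union_sdiff_of_subset (Finset.subset_univ _)).symm
      rw [h1]
      conv_lhs => rw [h2]
      rw [Finset.filter_union, Finset.card_union_of_disjoint
        (Finset.disjoint_filter_filter Finset.disjoint_sdiff)]
    have hsplit' : (Gp.degree t : ℝ) = (((B k).filter fun u => Gp.Adj t u).card : ℝ)
        + (((Finset.univ \ B k).filter fun u => Gp.Adj t u).card : ℝ) := by
      exact_mod_cast congrArg (Nat.cast (R := ℝ)) hsplit
    rw [hθ] at hlt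
    linarith
  have hUnion : ∀ k, Finset.univ \ B (k+1) = (Finset.univ \ B k) ∪ (B k \ B (k+1)) := by
    intro k
    have hsv : ∀ v, v ∈ B (k+1) → v ∈ B k := fun v h => hBmono k h
    ext v
    simp only [Finset.mem_sdiff, Finset.mem_union, Finset.mem_univ, true_and]
    constructor
    · intro h
      by_cases hv : v ∈ B k
      · exact Or.inr ⟨hv, h⟩
      · exact Or.inl hv
    · rintro (h | ⟨-, h⟩)
      · exact fun h' => h (hsv v h')
      · exact h
  have hDisj : ∀ k, Disjoint (Finset.univ \ B k) (B k \ B (k+1)) := by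
    intro k
    exact Finset.disjoint_of_subset_right Finset.sdiff_subset Finset.sdiff_disjoint
  have hEbound : ∀ k, 2 * (p * d / 5) * (((Finset.univ \ B k).card : ℝ) - S0.card)
      ≤ (Ecount Gp (Finset.univ \ B k) : ℝ) := by
    intro k
    induction k with
    | zero =>
      have e0 : Finset.univ \ B 0 = S0 := by
        rw [hB0, Finset.sdiff_sdiff_self_left, Finset.univ_inter]
      rw [e0, sub_self, mul_zero]
      positivity
    | succ k ih =>
      have hstep := Ecount_step Gp (Finset.univ \ B k) (B k \ B (k+1)) (hDisj k) (p * d / 5)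
        (fun t htm => hremoved k t (Finset.mem_sdiff.mp htm).1 (Finset.mem_sdiff.mp htm).2)
      rw [hUnion k, Finset.card_union_of_disjoint (hDisj k)]
      have expand : 2 * (p * d / 5) * ((((Finset.univ \ B k).card + (B k \ B (k+1)).card : ℕ) : ℝ)
            - S0.card)
          = 2 * (p * d / 5) * (((Finset.univ \ B k).card : ℝ) - S0.card)
            + 2 * (p * d / 5) * ((B k \ B (k+1)).card : ℝ) := by
        push_cast; ring
      rw [expand]
      linarith [hstep, ih]
  have hcardsd : (Finset.univ \ S0).card = n - S0.card := by
    rw [Finset.card_sdiff_of_subset (Finset.subset_univ _), Finset.card_univ, hcard]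
  have hs_le_n : S0.card ≤ n := by
    rw [← hcard]; exact le_trans (Finset.card_le_univ _) (le_of_eq Finset.card_univ)
  have hAsub : A ⊆ Finset.univ \ S0 := by rw [hA]; exact peel_iterate_subset _ _ _ n
  have h1 : (Finset.univ \ S0).card - A.card ≤ 2 * S0.card := by
    by_contra hcon
    push_neg at hcon
    rw [hcardsd] at hcon
    have hBn : B n = A := by simp only [hBdef]; exact hA.symm
    have hAcard' : A.card ≤ n - S0.card := by
      rw [← hcardsd]; exact Finset.card_le_card hAsub
    have hQn : 3 * S0.card < (Finset.univ \ B n).card := by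
      rw [Finset.card_sdiff_of_subset (Finset.subset_univ _), Finset.card_univ, hcard, hBn]
      omega
    have hQex : ∃ j, 3 * S0.card < (Finset.univ \ B j).card := ⟨n, hQn⟩
    have hkQ : 3 * S0.card < (Finset.univ \ B (Nat.find hQex)).card := Nat.find_spec hQex
    have hk0ne : Nat.find hQex ≠ 0 := by
      intro h
      rw [h] at hkQ
      have e0 : Finset.univ \ B 0 = S0 := by
        rw [hB0, Finset.sdiff_sdiff_self_left, Finset.univ_inter]
      rw [e0] at hkQ
      omega
    obtain ⟨m', hm'⟩ : ∃ m', Nat.find hQex = m' + 1 := ⟨Nat.find hQex - 1, by omega⟩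
    have hmlt : ¬ (3 * S0.card < (Finset.univ \ B m').card) := Nat.find_min hQex (by omega)
    push_neg at hmlt
    rw [hm'] at hkQ
    have hcardCT : (Finset.univ \ B m').card + (B m' \ B (m'+1)).card
        = (Finset.univ \ B (m'+1)).card := by
      rw [hUnion m', Finset.card_union_of_disjoint (hDisj m')]
    have hr : 3 * S0.card + 1 - (Finset.univ \ B m').card ≤ (B m' \ B (m'+1)).card := by omega
    obtain ⟨T', hT'sub, hT'card⟩ := Finset.exists_subset_card_eq hr
    have hdisj' : Disjoint (Finset.univ \ B m') T' :=
      Finset.disjoint_of_subset_right hT'sub (hDisj m')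
    have hUcardn : ((Finset.univ \ B m') ∪ T').card = 3 * S0.card + 1 := by
      rw [Finset.card_union_of_disjoint hdisj', hT'card]
      omega
    have hstep := Ecount_step Gp (Finset.univ \ B m') T' hdisj' (p * d / 5)
      (fun t htm => hremoved m' t (Finset.mem_sdiff.mp (hT'sub htm)).1
        (Finset.mem_sdiff.mp (hT'sub htm)).2)
    set U := (Finset.univ \ B m') ∪ T' with hUdef
    have hcc : ((Finset.univ \ B m').card : ℝ) + (T'.card : ℝ) = 3 * (S0.card : ℝ) + 1 := by
      have : (Finset.univ \ B m').card + T'.card = 3 * S0.card + 1 := by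
        rw [← Finset.card_union_of_disjoint hdisj']; exact hUcardn
      exact_mod_cast congrArg (Nat.cast (R := ℝ)) this
    have hlow : 2 * (p * d / 5) * (2 * (S0.card : ℝ) + 1) ≤ (Ecount Gp U : ℝ) := by
      have expand : 2 * (p * d / 5) * (2 * (S0.card : ℝ) + 1)
          = 2 * (p * d / 5) * (((Finset.univ \ B m').card : ℝ) - S0.card)
            + 2 * (p * d / 5) * (T'.card : ℝ) := by
        rw [show (2 * (S0.card : ℝ) + 1)
            = (((Finset.univ \ B m').card : ℝ) - S0.card) + (T'.card : ℝ) by linarith]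
        ring
      rw [expand]
      linarith [hEbound m', hstep]
    have hup1 : (Ecount Gp U : ℝ) ≤ (Ecount G U : ℝ) := by
      exact_mod_cast Ecount_mono Gp G hle U
    have hup2 := mixing G d lam hlam0 hreg hspec U
    rw [hcard] at hup2
    have hUcardR : (U.card : ℝ) = 3 * (S0.card : ℝ) + 1 := by
      exact_mod_cast congrArg (Nat.cast (R := ℝ)) hUcardn
    rw [hUcardR] at hup2
    -- numeric part
    have hnpos : 0 < n := by
      have hle' : (Finset.univ \ B (m'+1)).card ≤ n := by
        rw [← hcard]
        exact le_trans (Finset.card_le_univ _) (le_of_eq Finset.card_univ)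
      omega
    have hn'pos : (0:ℝ) < n := by exact_mod_cast hnpos
    have hdn : (d:ℝ) < n := by
      have hV : 0 < Fintype.card V := by rw [hcard]; exact hnpos
      obtain ⟨v⟩ := Fintype.card_pos_iff.mp hV
      have hdlt := G.degree_lt_card_verts v
      rw [hreg v, hcard] at hdlt
      exact_mod_cast hdlt
    have hs0 : (0:ℝ) ≤ (S0.card : ℝ) := by positivity
    have hεn : (S0.card : ℝ) ≤ Real.exp (-lam / 12) * n := hS0card
    have hlamsq : Real.sqrt d ≤ lam := by
      rw [hlamdef]; nlinarith [hsq0, hc]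
    have hlowE : 2 * (p * d / 5) * (2 * (S0.card : ℝ) + 1) ≤ (Ecount G U : ℝ) :=
      le_trans hlow hup1
    exact numeric_contra d n hd lam (S0.card : ℝ) (Ecount G U : ℝ) (p * d / 5)
      hs0 hn'pos hdn hlamsq hεn hm0 hlowE hup2
  refine ⟨h1, ?_⟩
  have hAcard : A.card ≤ n - S0.card := by
    rw [← hcardsd]; exact Finset.card_le_card hAsub
  have h2 : (Finset.univ \ A).card ≤ 3 * S0.card := by
    rw [Finset.card_sdiff_of_subset (Finset.subset_univ _), Finset.card_univ, hcard]
    rw [hcardsd] at h1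
    omega
  calc ((Finset.univ \ A).card : ℝ) ≤ ((3 * S0.card : ℕ) : ℝ) := by exact_mod_cast h2
    _ ≤ 3 * (Real.exp (-lam / 12) * n) := by push_cast; linarith [hS0card]
    _ = 3 * Real.exp (-lam / 12) * n := by ring
end
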